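/- Let Θ := Z_{K−1} ⋯ Z₂ Z₁ be the product (in decreasing order of indices) of n×n complex matrices Z₁, …, Z_{K−1} satisfying the hypotheses of the general composition law, namely: for each j with 1 ≤ j ≤ K−1 the partial product Θ_j := Z_{K−1} ⋯ Z_{j+1} is invertible and Z_j = (Θ_j⁻¹ Ω_jᴴ Θ_j) Ω_j for some n×n complex matrices Ω₁, …, Ω_{K−1}. If moreover the composed map Ω := Ω_{K−1} ⋯ Ω₁ is invertible, then Θ is a Hermitian positive definite matrix. -/

import Mathlib

open Matrix ComplexOrder

/-- The descending product `Z_{K-1} * Z_{K-2} * ⋯ * Z_{k+1}`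
(the identity matrix when `k ≥ K-1`). -/
noncomputable def descProd {n : ℕ} (Z : ℕ → Matrix (Fin n) (Fin n) ℂ) (K k : ℕ) :
    Matrix (Fin n) (Fin n) ℂ :=
  ((List.range (K - 1 - k)).map (fun i => Z (K - 1 - i))).prod

lemma descProd_succ {n : ℕ} (Z : ℕ → Matrix (Fin n) (Fin n) ℂ) (K k : ℕ)
    (hk : k + 1 ≤ K - 1) :
    descProd Z K k = descProd Z K (k + 1) * Z (k + 1) := by
  unfold descProd
  have h1 : K - 1 - k = (K - 1 - (k + 1)) + 1 := by omega
  have h2 : K - 1 - (K - 1 - (k + 1)) = k + 1 := by omega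
  rw [h1, List.range_succ, List.map_append, List.prod_append]
  simp [h2]

/-- The factorized metric Θ = Z_{K-1} ⋯ Z₁ = Ωᴴ Ω (with Ω the invertible composed
Dyson map) is an admissible, i.e. Hermitian positive definite, metric. -/
theorem factorized_metric_posDef (n K : ℕ) (hK : 2 ≤ K)
    (Z Ω : ℕ → Matrix (Fin n) (Fin n) ℂ)
    (hinv : ∀ j, 1 ≤ j → j ≤ K - 1 → IsUnit (descProd Z K j))
    (hfac : ∀ j, 1 ≤ j → j ≤ K - 1 →
      Z j = ((descProd Z K j)⁻¹ * (Ω j)ᴴ * (descProd Z K j)) * Ω j)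
    (hΩ : IsUnit (descProd Ω K 0)) :
    (descProd Z K 0).PosDef := by
  have key : ∀ d, d ≤ K - 1 →
      descProd Z K (K - 1 - d) = (descProd Ω K (K - 1 - d))ᴴ * descProd Ω K (K - 1 - d) := by
    intro d
    induction d with
    | zero =>
      intro _
      simp only [Nat.sub_zero]
      have : ∀ (W : ℕ → Matrix (Fin n) (Fin n) ℂ), descProd W K (K - 1) = 1 := by
        intro W; unfold descProd; simp
      rw [this Z, this Ω]; simp
    | succ d ih =>
      intro hd
      have hd' : d ≤ K - 1 := by omega
      have IH := ih hd'
      set j := K - 1 - (d + 1) with hj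
      have hj1 : j + 1 = K - 1 - d := by omega
      have hj1le : j + 1 ≤ K - 1 := by omega
      have hZ := descProd_succ Z K j hj1le
      have hΩ' := descProd_succ Ω K j hj1le
      have hPinv : IsUnit (descProd Z K (j + 1)) ∨ j + 1 = K - 1 := by
        by_cases h : j + 1 = K - 1
        · exact Or.inr h
        · exact Or.inl (hinv (j+1) (by omega) hj1le)
      have hPunit : IsUnit (descProd Z K (j + 1)) := by
        rcases hPinv with h | h
        · exact h
        · unfold descProd; rw [h]; simp
      have hfacj := hfac (j + 1) (by omega) hj1le
      rw [← hj1] at IH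
      have hmul : descProd Z K (j + 1) * (descProd Z K (j + 1))⁻¹ = 1 :=
        Matrix.mul_nonsing_inv _ ((Matrix.isUnit_iff_isUnit_det _).mp hPunit)
      rw [hZ, hΩ', hfacj, Matrix.conjTranspose_mul]
      calc descProd Z K (j+1) *
            ((descProd Z K (j+1))⁻¹ * (Ω (j+1))ᴴ * descProd Z K (j+1) * Ω (j+1))
          = (descProd Z K (j+1) * (descProd Z K (j+1))⁻¹) *
            ((Ω (j+1))ᴴ * (descProd Z K (j+1) * Ω (j+1))) := by
            simp only [Matrix.mul_assoc]
        _ = (Ω (j+1))ᴴ * (descProd Z K (j+1) * Ω (j+1)) := by rw [hmul, one_mul]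
        _ = (Ω (j+1))ᴴ * (descProd Ω K (j+1))ᴴ * (descProd Ω K (j+1) * Ω (j+1)) := by
            rw [IH]; simp only [Matrix.mul_assoc]
  have h0 : descProd Z K 0 = (descProd Ω K 0)ᴴ * descProd Ω K 0 := by
    have := key (K - 1) (le_refl _)
    simpa [Nat.sub_self] using this
  rw [h0]
  refine Matrix.posDef_iff_dotProduct_mulVec.mpr ⟨Matrix.isHermitian_conjTranspose_mul_self _, fun x hx => ?_⟩
  rw [← mulVec_mulVec, dotProduct_mulVec, vecMul_conjTranspose, star_star]
  refine Matrix.dotProduct_star_self_pos_iff.mpr ?_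
  intro h
  have : Invertible (descProd Ω K 0) := hΩ.invertible
  exact hx (Matrix.mulVec_injective_of_invertible _ (by simpa using h))
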